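/- Let n, k ∈ ℕ with k ≤ n and let r > 0. Then there exist constants C₁, C₂ > 0 such that for every k-dimensional linear subspace V of ℝⁿ and all linear maps T₁, T₂ : V → V⊥ of operator norm at most r, the graph subspaces W_i = {x + T_i x : x ∈ V} (i = 1, 2) satisfy C₁ · d_proj(W₁, W₂) ≤ ‖T₁ − T₂‖ ≤ C₂ · d_proj(W₁, W₂), where ‖·‖ is the operator norm. -/

import Mathlib

noncomputable section

open Metric Set

/-- Two linear subspaces of ℝⁿ are transverse if the dimension of their span is maximal. -/
def Transv {n : ℕ} (V W : Submodule ℝ (EuclideanSpace ℝ (Fin n))) : Prop :=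
  Module.finrank ℝ ↥(V ⊔ W) = min (Module.finrank ℝ ↥V + Module.finrank ℝ ↥W) n

/-- The space of directions of the affine span of a family of points (Gr(Δ)). -/
def simplexDir {n m : ℕ} (v : Fin m → EuclideanSpace ℝ (Fin n)) :
    Submodule ℝ (EuclideanSpace ℝ (Fin n)) :=
  (affineSpan ℝ (Set.range v)).direction

/-- Orthogonal projection of ℝⁿ onto the orthogonal complement of V, as a map ℝⁿ → ℝⁿ. -/
def projPerp {n : ℕ} (V : Submodule ℝ (EuclideanSpace ℝ (Fin n)))
    (x : EuclideanSpace ℝ (Fin n)) : EuclideanSpace ℝ (Fin n) :=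
  (Vᗮ.orthogonalProjectionOnto x : EuclideanSpace ℝ (Fin n))

/-- Orthogonal projection onto V as a continuous linear endomorphism of ℝⁿ. -/
def projCL {n : ℕ} (V : Submodule ℝ (EuclideanSpace ℝ (Fin n))) :
    EuclideanSpace ℝ (Fin n) →L[ℝ] EuclideanSpace ℝ (Fin n) :=
  V.subtypeL.comp V.orthogonalProjectionOnto

/-- Operator-norm distance between orthogonal projections. -/
def dProj {n : ℕ} (V W : Submodule ℝ (EuclideanSpace ℝ (Fin n))) : ℝ :=
  ‖projCL V - projCL W‖

/-- `p⋆Δ` is `δ`-semitransverse to `𝔉(V)` in `p`. -/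
def SemiT {n m : ℕ} (δ : ℝ) (p : EuclideanSpace ℝ (Fin n))
    (v : Fin m → EuclideanSpace ℝ (Fin n))
    (V : Submodule ℝ (EuclideanSpace ℝ (Fin n))) : Prop :=
  ∀ p' : EuclideanSpace ℝ (Fin n), dist p' p < δ →
    AffineIndependent ℝ (Fin.cons p' v : Fin (m+1) → EuclideanSpace ℝ (Fin n)) ∧
    Transv (simplexDir (Fin.cons p' v : Fin (m+1) → EuclideanSpace ℝ (Fin n))) V

/-- Maximal distance between two vertices of a simplex. -/
def rMax {n m : ℕ} (v : Fin m → EuclideanSpace ℝ (Fin n)) : ℝ :=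
  ⨆ i, ⨆ j, dist (v i) (v j)

/-- Minimal distance between a vertex and the affine span of the opposite face. -/
def rMin {n m : ℕ} (v : Fin m → EuclideanSpace ℝ (Fin n)) : ℝ :=
  ⨅ i, Metric.infDist (v i) (affineSpan ℝ (v '' {i}ᶜ) : Set (EuclideanSpace ℝ (Fin n)))

/-- The degeneracy quantity Λ(Δ). -/
def Lam {n m : ℕ} (v : Fin (m+1) → EuclideanSpace ℝ (Fin n)) : ℝ :=
  sSup {t : ℝ | ∃ lam : Fin m → ℝ,
    ‖∑ i, lam i • (v i.succ - v 0)‖ = 1 ∧ ∃ i, t = |lam i|}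

/-- ε-transversality of a simplex with vertices `v` to the constant foliation `𝔉(V)`. -/
def EpsT {n m : ℕ} (ε : ℝ) (v : Fin (m+1) → EuclideanSpace ℝ (Fin n))
    (V : Submodule ℝ (EuclideanSpace ℝ (Fin n))) : Prop :=
  ∀ D : Submodule ℝ (EuclideanSpace ℝ (Fin n)),
    Module.finrank ℝ ↥D = m → dProj (simplexDir v) D < ε → Transv D V

/-- δ-semitransversality of a simplex in its `i`-th vertex. -/
def STat {n m : ℕ} (δ : ℝ) (w : Fin m → EuclideanSpace ℝ (Fin n)) (i : Fin m)
    (V : Submodule ℝ (EuclideanSpace ℝ (Fin n))) : Prop :=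
  ∀ p' : EuclideanSpace ℝ (Fin n), dist p' (w i) < δ →
    AffineIndependent ℝ (Function.update w i p') ∧
    Transv (simplexDir (Function.update w i p')) V

/-- The coordinate subspace ℝᵏ × {0} of ℝⁿ. -/
def stdFol (n k : ℕ) : Submodule ℝ (EuclideanSpace ℝ (Fin n)) where
  carrier := {x | ∀ i : Fin n, k ≤ (i : ℕ) → x i = 0}
  zero_mem' := fun i _ => rfl
  add_mem' := by
    intro x y hx hy i hi
    show x i + y i = 0
    rw [hx i hi, hy i hi, add_zero]
  smul_mem' := by
    intro c x hx i hi
    show c * x i = 0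
    rw [hx i hi, mul_zero]

/-- Graph of a linear map V → V⊥ as a subspace of ℝⁿ. -/
def graphOf {n : ℕ} {V : Submodule ℝ (EuclideanSpace ℝ (Fin n))}
    (T : ↥V →L[ℝ] ↥Vᗮ) : Submodule ℝ (EuclideanSpace ℝ (Fin n)) :=
  LinearMap.range (V.subtype + Vᗮ.subtype.comp T.toLinearMap)

section Aux
open RealInnerProductSpace

variable {n : ℕ} {V : Submodule ℝ (EuclideanSpace ℝ (Fin n))}

lemma pyth {a b : EuclideanSpace ℝ (Fin n)} (ha : a ∈ V) (hb : b ∈ Vᗮ) :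
    ‖a‖ ≤ ‖a + b‖ ∧ ‖b‖ ≤ ‖a + b‖ := by
  have h0 : (inner ℝ a b : ℝ) = 0 := Submodule.inner_right_of_mem_orthogonal ha hb
  have hsq := norm_add_sq_real a b
  rw [h0] at hsq
  constructor <;> nlinarith [norm_nonneg a, norm_nonneg b, norm_nonneg (a+b)]

lemma mem_graphOf_aux {T : ↥V →L[ℝ] ↥Vᗮ} {u : EuclideanSpace ℝ (Fin n)} :
    u ∈ graphOf T ↔ ∃ x : ↥V, (x : EuclideanSpace ℝ (Fin n)) + (T x : EuclideanSpace ℝ (Fin n)) = u := by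
  simp [graphOf, LinearMap.mem_range]

lemma projCL_apply (W : Submodule ℝ (EuclideanSpace ℝ (Fin n))) (z : EuclideanSpace ℝ (Fin n)) :
    projCL W z = (W.orthogonalProjectionOnto z : EuclideanSpace ℝ (Fin n)) := rfl

lemma projCL_eq_self {W : Submodule ℝ (EuclideanSpace ℝ (Fin n))} {u : EuclideanSpace ℝ (Fin n)}
    (hu : u ∈ W) : projCL W u = u := by
  rw [projCL_apply, ← Submodule.starProjection_apply, Submodule.starProjection_eq_self_iff.2 hu]

lemma projCL_mem (W : Submodule ℝ (EuclideanSpace ℝ (Fin n))) (z : EuclideanSpace ℝ (Fin n)) :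
    projCL W z ∈ W := (W.orthogonalProjectionOnto z).2

lemma sub_projCL_mem (W : Submodule ℝ (EuclideanSpace ℝ (Fin n))) (z : EuclideanSpace ℝ (Fin n)) :
    z - projCL W z ∈ Wᗮ := Submodule.sub_starProjection_mem_orthogonal z

lemma projCL_min {W : Submodule ℝ (EuclideanSpace ℝ (Fin n))} {w : EuclideanSpace ℝ (Fin n)}
    (hw : w ∈ W) (u : EuclideanSpace ℝ (Fin n)) :
    ‖u - projCL W u‖ ≤ ‖u - w‖ := by
  rw [projCL_apply, ← Submodule.starProjection_apply, Submodule.starProjection_minimal]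
  exact ciInf_le ⟨0, by rintro t ⟨z, rfl⟩; exact norm_nonneg _⟩ (⟨w, hw⟩ : W)

-- key lemma 1
lemma graph_dist (T₁ T₂ : ↥V →L[ℝ] ↥Vᗮ) {u : EuclideanSpace ℝ (Fin n)} (hu : u ∈ graphOf T₁) :
    ‖u - projCL (graphOf T₂) u‖ ≤ ‖T₁ - T₂‖ * ‖u‖ := by
  obtain ⟨x, hx⟩ := mem_graphOf_aux.1 hu
  have hw : (x : EuclideanSpace ℝ (Fin n)) + (T₂ x : EuclideanSpace ℝ (Fin n)) ∈ graphOf T₂ :=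
    mem_graphOf_aux.2 ⟨x, rfl⟩
  calc ‖u - projCL (graphOf T₂) u‖
      ≤ ‖u - ((x : EuclideanSpace ℝ (Fin n)) + (T₂ x : EuclideanSpace ℝ (Fin n)))‖ := projCL_min hw u
    _ = ‖((T₁ - T₂) x : EuclideanSpace ℝ (Fin n))‖ := by
        rw [← hx]
        congr 1
        rw [ContinuousLinearMap.sub_apply, Submodule.coe_sub]
        abel
    _ ≤ ‖T₁ - T₂‖ * ‖x‖ := (T₁ - T₂).le_opNorm x
    _ ≤ ‖T₁ - T₂‖ * ‖u‖ := by
        apply mul_le_mul_of_nonneg_left _ (norm_nonneg (T₁ - T₂))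
        have := (pyth x.2 (T₁ x).2).1
        rw [hx] at this
        exact this

-- key lemma 2: projection of W₁-perp vectors onto W₂ is small
lemma perp_proj_small (T₁ T₂ : ↥V →L[ℝ] ↥Vᗮ) {w : EuclideanSpace ℝ (Fin n)}
    (hw : w ∈ (graphOf T₁)ᗮ) :
    ‖projCL (graphOf T₂) w‖ ≤ ‖T₁ - T₂‖ * ‖w‖ := by
  set q := projCL (graphOf T₂) w with hq
  have hqmem : q ∈ graphOf T₂ := projCL_mem _ w
  have h1 : (inner ℝ q (w - q) : ℝ) = 0 :=
    Submodule.inner_right_of_mem_orthogonal hqmem (sub_projCL_mem _ w)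
  have hsq : ‖q‖ ^ 2 = inner ℝ q w := by
    have : (inner ℝ q w : ℝ) = inner ℝ q q + inner ℝ q (w - q) := by
      rw [← inner_add_right]; congr 1; abel
    rw [this, h1, real_inner_self_eq_norm_sq]; ring
  have h2 : (inner ℝ (projCL (graphOf T₁) q) w : ℝ) = 0 := by
    exact Submodule.inner_right_of_mem_orthogonal (projCL_mem _ q) hw
  have h3 : (inner ℝ q w : ℝ) = inner ℝ (q - projCL (graphOf T₁) q) w := by
    rw [inner_sub_left, h2]; ring
  have h4 : ‖q - projCL (graphOf T₁) q‖ ≤ ‖T₁ - T₂‖ * ‖q‖ := by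
    have := graph_dist T₂ T₁ hqmem
    rwa [norm_sub_rev T₂ T₁] at this
  have h5 : ‖q‖ ^ 2 ≤ ‖T₁ - T₂‖ * ‖q‖ * ‖w‖ := by
    rw [hsq, h3]
    calc (inner ℝ (q - projCL (graphOf T₁) q) w : ℝ)
        ≤ ‖q - projCL (graphOf T₁) q‖ * ‖w‖ := real_inner_le_norm _ _
      _ ≤ ‖T₁ - T₂‖ * ‖q‖ * ‖w‖ := mul_le_mul_of_nonneg_right h4 (norm_nonneg w)
  rcases eq_or_lt_of_le (norm_nonneg q) with h | h
  · rw [← h]; positivity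
  · have := (mul_le_mul_iff_left₀ h).1 (by nlinarith : ‖q‖ * ‖q‖ ≤ (‖T₁ - T₂‖ * ‖w‖) * ‖q‖)
    linarith

lemma upper (T₁ T₂ : ↥V →L[ℝ] ↥Vᗮ) :
    ‖projCL (graphOf T₁) - projCL (graphOf T₂)‖ ≤ 2 * ‖T₁ - T₂‖ := by
  apply ContinuousLinearMap.opNorm_le_bound _ (by positivity)
  intro z
  set P₁ := projCL (graphOf T₁)
  set P₂ := projCL (graphOf T₂)
  have key : (P₁ - P₂) z = (P₁ z - P₂ (P₁ z)) - (P₂ (z - P₁ z)) := by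
    simp only [ContinuousLinearMap.sub_apply, map_sub]
    abel
  have hz1 : ‖P₁ z‖ ≤ ‖z‖ := by
    have := (pyth (projCL_mem (graphOf T₁) z) (sub_projCL_mem (graphOf T₁) z)).1
    simpa using this
  have hz2 : ‖z - P₁ z‖ ≤ ‖z‖ := by
    have := (pyth (projCL_mem (graphOf T₁) z) (sub_projCL_mem (graphOf T₁) z)).2
    simpa using this
  calc ‖(P₁ - P₂) z‖ ≤ ‖P₁ z - P₂ (P₁ z)‖ + ‖P₂ (z - P₁ z)‖ := by rw [key]; exact norm_sub_le _ _
    _ ≤ ‖T₁ - T₂‖ * ‖P₁ z‖ + ‖T₁ - T₂‖ * ‖z - P₁ z‖ :=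
        add_le_add (graph_dist T₁ T₂ (projCL_mem _ z)) (perp_proj_small T₁ T₂ (sub_projCL_mem _ z))
    _ ≤ ‖T₁ - T₂‖ * ‖z‖ + ‖T₁ - T₂‖ * ‖z‖ :=
        add_le_add (mul_le_mul_of_nonneg_left hz1 (norm_nonneg (T₁ - T₂))) (mul_le_mul_of_nonneg_left hz2 (norm_nonneg (T₁ - T₂)))
    _ = 2 * ‖T₁ - T₂‖ * ‖z‖ := by ring

lemma lower {r : ℝ} (T₁ T₂ : ↥V →L[ℝ] ↥Vᗮ) (h₁ : ‖T₁‖ ≤ r) (h₂ : ‖T₂‖ ≤ r) :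
    ‖T₁ - T₂‖ ≤ (1+r)^2 * ‖projCL (graphOf T₁) - projCL (graphOf T₂)‖ := by
  have hr0 : 0 ≤ r := le_trans (norm_nonneg T₁) h₁
  apply ContinuousLinearMap.opNorm_le_bound _ (by positivity)
  intro x
  set P₁ := projCL (graphOf T₁)
  set P₂ := projCL (graphOf T₂)
  set u : EuclideanSpace ℝ (Fin n) := (x : EuclideanSpace ℝ (Fin n)) + (T₁ x : EuclideanSpace ℝ (Fin n)) with hu_def
  have hu : u ∈ graphOf T₁ := mem_graphOf_aux.2 ⟨x, rfl⟩
  have hP₁u : P₁ u = u := projCL_eq_self hu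
  obtain ⟨y, hy⟩ := mem_graphOf_aux.1 (projCL_mem (graphOf T₂) u)
  have hdiff : u - P₂ u = ((x : EuclideanSpace ℝ (Fin n)) - y) +
      ((T₁ x : EuclideanSpace ℝ (Fin n)) - (T₂ y : EuclideanSpace ℝ (Fin n))) := by
    rw [← hy, hu_def]; abel
  have hmemV : ((x : EuclideanSpace ℝ (Fin n)) - y) ∈ V := sub_mem x.2 y.2
  have hmemP : ((T₁ x : EuclideanSpace ℝ (Fin n)) - (T₂ y : EuclideanSpace ℝ (Fin n))) ∈ Vᗮ :=
    sub_mem (T₁ x).2 (T₂ y).2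
  have pp := pyth hmemV hmemP
  rw [← hdiff] at pp
  set a := ‖u - P₂ u‖ with ha_def
  have ha0 : 0 ≤ a := norm_nonneg _
  have hTyx : ‖(T₂ y : EuclideanSpace ℝ (Fin n)) - (T₂ x : EuclideanSpace ℝ (Fin n))‖ ≤ r * a := by
    have : (T₂ y : EuclideanSpace ℝ (Fin n)) - (T₂ x : EuclideanSpace ℝ (Fin n)) = (T₂ (y - x) : EuclideanSpace ℝ (Fin n)) := by
      rw [map_sub]; rfl
    rw [this]
    calc ‖(T₂ (y - x) : EuclideanSpace ℝ (Fin n))‖ = ‖T₂ (y - x)‖ := rfl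
      _ ≤ ‖T₂‖ * ‖y - x‖ := T₂.le_opNorm _
      _ ≤ r * a := by
          apply mul_le_mul h₂ _ (norm_nonneg _) hr0
          have : ‖y - x‖ = ‖(x : EuclideanSpace ℝ (Fin n)) - y‖ := by
            rw [show ‖y - x‖ = ‖(y : EuclideanSpace ℝ (Fin n)) - x‖ from rfl, norm_sub_rev]
          rw [this]; exact pp.1
  have hkey : ‖(T₁ - T₂) x‖ ≤ (1 + r) * a := by
    calc ‖(T₁ - T₂) x‖ = ‖(T₁ x : EuclideanSpace ℝ (Fin n)) - (T₂ x : EuclideanSpace ℝ (Fin n))‖ := rfl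
      _ ≤ ‖(T₁ x : EuclideanSpace ℝ (Fin n)) - (T₂ y : EuclideanSpace ℝ (Fin n))‖ +
          ‖(T₂ y : EuclideanSpace ℝ (Fin n)) - (T₂ x : EuclideanSpace ℝ (Fin n))‖ :=
            norm_sub_le_norm_sub_add_norm_sub _ _ _
      _ ≤ a + r * a := add_le_add pp.2 hTyx
      _ = (1 + r) * a := by ring
  have hau : a ≤ ‖P₁ - P₂‖ * ‖u‖ := by
    calc a = ‖P₁ u - P₂ u‖ := by rw [ha_def, hP₁u]
      _ = ‖(P₁ - P₂) u‖ := by rw [ContinuousLinearMap.sub_apply]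
      _ ≤ ‖P₁ - P₂‖ * ‖u‖ := (P₁ - P₂).le_opNorm u
  have hun : ‖u‖ ≤ (1 + r) * ‖x‖ := by
    calc ‖u‖ ≤ ‖(x : EuclideanSpace ℝ (Fin n))‖ + ‖(T₁ x : EuclideanSpace ℝ (Fin n))‖ := norm_add_le _ _
      _ = ‖x‖ + ‖T₁ x‖ := rfl
      _ ≤ ‖x‖ + r * ‖x‖ := by
          have := T₁.le_opNorm x
          have h' : ‖T₁‖ * ‖x‖ ≤ r * ‖x‖ := mul_le_mul_of_nonneg_right h₁ (norm_nonneg x)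
          linarith
      _ = (1 + r) * ‖x‖ := by ring
  have hP : 0 ≤ ‖P₁ - P₂‖ := norm_nonneg _
  calc ‖(T₁ - T₂) x‖ ≤ (1 + r) * a := hkey
    _ ≤ (1 + r) * (‖P₁ - P₂‖ * ((1 + r) * ‖x‖)) := by
        apply mul_le_mul_of_nonneg_left _ (by linarith)
        exact le_trans hau (mul_le_mul_of_nonneg_left hun hP)
    _ = (1 + r) ^ 2 * ‖P₁ - P₂‖ * ‖x‖ := by ring


end Aux

theorem stmt_5 (n k : ℕ) (hk : k ≤ n) (r : ℝ) (hr : 0 < r) :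
    ∃ C₁ > (0:ℝ), ∃ C₂ > (0:ℝ),
      ∀ V : Submodule ℝ (EuclideanSpace ℝ (Fin n)), Module.finrank ℝ ↥V = k →
        ∀ T₁ T₂ : ↥V →L[ℝ] ↥Vᗮ, ‖T₁‖ ≤ r → ‖T₂‖ ≤ r →
          C₁ * dProj (graphOf T₁) (graphOf T₂) ≤ ‖T₁ - T₂‖ ∧
          ‖T₁ - T₂‖ ≤ C₂ * dProj (graphOf T₁) (graphOf T₂) := by
  refine ⟨1/2, by norm_num, (1+r)^2, by positivity, fun V _ T₁ T₂ h₁ h₂ => ?_⟩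
  have hd : dProj (graphOf T₁) (graphOf T₂) = ‖projCL (graphOf T₁) - projCL (graphOf T₂)‖ := rfl
  constructor
  · have := upper T₁ T₂
    rw [hd]; linarith
  · rw [hd]; exact lower T₁ T₂ h₁ h₂
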